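/- arXiv:1405.0149 — 5 statements merged into one kernel-verified Lean document; each statement's English description precedes it below -/
import Mathlib

section
/- Let q be a prime power, n a positive integer, and C2 ⊆ C1 ⊆ F_q^n nested F_q-linear codes. For any subset J of {1,…,n} with complement J̄, the following are equivalent: (i) dim P̃_J(ker P̃_J̄) = dim C1 − dim C2; (ii) both dim P_J(C1) + dim C2 = dim P_J(C2) + dim C1 (i.e., dim P_J(C1) − dim P_J(C2) = dim C1 − dim C2) and dim P_J̄(C1) = dim P_J̄(C2). -/
set_option autoImplicit false

open Submodule Module

variable {F : Type*} [Field F] [Fintype F] {n : ℕ}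

/-- `P_J`: the projection onto the coordinates in `J`. -/
noncomputable def proj (J : Finset (Fin n)) : (Fin n → F) →ₗ[F] (J → F) :=
  LinearMap.funLeft F F (fun j => (j : Fin n))

/-- `P̃_J : C1/C2 → P_J(C1)/P_J(C2)`, the induced map sending `x + C2` to `P_J(x) + P_J(C2)`. -/
noncomputable def ptilde (C1 C2 : Submodule F (Fin n → F)) (J : Finset (Fin n)) :
    (↥C1 ⧸ C2.comap C1.subtype) →ₗ[F]
      (↥(C1.map (proj J)) ⧸ (C2.map (proj J)).comap (C1.map (proj J)).subtype) :=
  Submodule.mapQ _ _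
    (LinearMap.codRestrict (C1.map (proj J)) ((proj J).comp C1.subtype)
      (fun x => Submodule.mem_map_of_mem x.2))
    (fun _ hx => Submodule.mem_map_of_mem hx)

lemma ptilde_surjective (C1 C2 : Submodule F (Fin n → F)) (J : Finset (Fin n)) :
    Function.Surjective (ptilde C1 C2 J) := by
  intro y
  obtain ⟨z, rfl⟩ := Submodule.Quotient.mk_surjective _ y
  obtain ⟨x, hx, hxz⟩ := z.2
  refine ⟨Submodule.Quotient.mk ⟨x, hx⟩, ?_⟩
  show Submodule.Quotient.mk _ = _
  congr 1
  exact Subtype.ext hxz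

lemma core_lemma {V W1 W2 : Type*} [AddCommGroup V] [Module F V] [FiniteDimensional F V]
    [AddCommGroup W1] [Module F W1] [AddCommGroup W2] [Module F W2]
    (f : V →ₗ[F] W1) (g : V →ₗ[F] W2) (hf : Function.Surjective f)
    (hg : Function.Surjective g) :
    finrank F ((LinearMap.ker g).map f) = finrank F V ↔
      (finrank F W1 = finrank F V ∧ finrank F W2 = 0) := by
  haveI : Module.Finite F W1 := Module.Finite.of_surjective f hf
  haveI : Module.Finite F W2 := Module.Finite.of_surjective g hg
  have hrn : finrank F (LinearMap.range g) + finrank F (LinearMap.ker g) = finrank F V :=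
    LinearMap.finrank_range_add_finrank_ker g
  have hrg : LinearMap.range g = ⊤ := LinearMap.range_eq_top.mpr hg
  have hrf : LinearMap.range f = ⊤ := LinearMap.range_eq_top.mpr hf
  have htop2 : finrank F (⊤ : Submodule F W2) = finrank F W2 := finrank_top F W2
  constructor
  · intro hdim
    have h1 : finrank F ((LinearMap.ker g).map f) ≤ finrank F (LinearMap.ker g) :=
      Submodule.finrank_map_le f _
    have h2 : finrank F (LinearMap.ker g) ≤ finrank F V := Submodule.finrank_le _
    have hker : finrank F (LinearMap.ker g) = finrank F V := le_antisymm h2 (by omega)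
    have hkt : LinearMap.ker g = ⊤ := Submodule.eq_top_of_finrank_eq hker
    constructor
    · have : (LinearMap.ker g).map f = ⊤ := by
        rw [hkt, Submodule.map_top, hrf]
      rw [this, finrank_top] at hdim
      exact hdim
    · rw [hrg, htop2] at hrn
      omega
  · rintro ⟨h1, h2⟩
    have hr0 : finrank F (LinearMap.range g) = 0 := by
      have := Submodule.finrank_le (LinearMap.range g)
      omega
    have hker : finrank F (LinearMap.ker g) = finrank F V := by omega
    have hkt : LinearMap.ker g = ⊤ := Submodule.eq_top_of_finrank_eq hker
    have : (LinearMap.ker g).map f = ⊤ := by rw [hkt, Submodule.map_top, hrf]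
    rw [this, finrank_top]
    exact h1

set_option synthInstance.maxHeartbeats 400000 in
lemma quot_dim {M : Type*} [AddCommGroup M] [Module F M] [FiniteDimensional F M]
    (C1 C2 : Submodule F M) (h : C2 ≤ C1) :
    finrank F (↥C1 ⧸ C2.comap C1.subtype) + finrank F C2 = finrank F C1 := by
  have e : finrank F (C2.comap C1.subtype) = finrank F C2 :=
    (Submodule.comapSubtypeEquivOfLe h).finrank_eq
  have := Submodule.finrank_quotient_add_finrank (C2.comap C1.subtype)
  omega

/-- For nested codes `C2 ⊆ C1 ⊆ F_q^n` and `J ⊆ {1,…,n}` with complement `J̄`: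
`dim P̃_J(ker P̃_J̄) = dim C1 − dim C2` iff both
`dim P_J(C1) − dim P_J(C2) = dim C1 − dim C2` and `dim P_J̄(C1) = dim P_J̄(C2)`. -/
theorem quantum_ramp_qualified_iff (hn : 0 < n) (C1 C2 : Submodule F (Fin n → F))
    (h : C2 ≤ C1) (J : Finset (Fin n)) :
    Module.finrank F ↥((LinearMap.ker (ptilde C1 C2 Jᶜ)).map (ptilde C1 C2 J))
        + Module.finrank F ↥C2 = Module.finrank F ↥C1
      ↔ (Module.finrank F ↥(C1.map (proj J)) + Module.finrank F ↥C2
            = Module.finrank F ↥(C2.map (proj J)) + Module.finrank F ↥C1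
          ∧ Module.finrank F ↥(C1.map (proj Jᶜ)) = Module.finrank F ↥(C2.map (proj Jᶜ))) := by
  have hV := quot_dim C1 C2 h
  have hJ := quot_dim (C1.map (proj J)) (C2.map (proj J)) (Submodule.map_mono h)
  have hJc := quot_dim (C1.map (proj Jᶜ)) (C2.map (proj Jᶜ)) (Submodule.map_mono h)
  have hcore := core_lemma (ptilde C1 C2 J) (ptilde C1 C2 Jᶜ)
    (ptilde_surjective C1 C2 J) (ptilde_surjective C1 C2 Jᶜ)
  omega
end

section
/- Let q be a prime power, n a positive integer, and C2 ⊆ D ⊆ C1 ⊆ F_q^n nested F_q-linear codes, and let J ⊆ {1,…,n} with complement J̄. Define D' = C2 + (D ∩ ker P_J̄). Then dim P_J(D) + dim P_J̄(D') ≤ dim P_J(D') + dim P_J̄(D); that is, replacing D by D' does not decrease the quantity dim P_J(D) − dim P_J̄(D). -/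
set_option autoImplicit false

open Submodule Module

variable {F : Type*} [Field F] [Fintype F] {n : ℕ}

private theorem finrank_map_aux {F M N : Type*} [Field F] [AddCommGroup M] [Module F M]
    [AddCommGroup N] [Module F N] [FiniteDimensional F M] (f : M →ₗ[F] N)
    (p : Submodule F M) :
    finrank F (p.map f) + finrank F ↥(p ⊓ LinearMap.ker f) = finrank F p := by
  have h := LinearMap.finrank_range_add_finrank_ker (f.comp p.subtype)
  rw [LinearMap.range_comp, Submodule.range_subtype, LinearMap.ker_comp] at h
  rwa [show p ⊓ LinearMap.ker f = (Submodule.comap p.subtype (LinearMap.ker f)).map p.subtype by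
    rw [Submodule.map_comap_eq, Submodule.range_subtype, inf_comm],
    Submodule.finrank_map_subtype_eq]

/-- With `D' = C2 + (D ∩ ker P_J̄)`, replacing `D` by `D'` does not decrease
`dim P_J(D) − dim P_J̄(D)`:  `dim P_J(D) + dim P_J̄(D') ≤ dim P_J(D') + dim P_J̄(D)`. -/
theorem replace_D_does_not_decrease (hn : 0 < n) (C1 C2 D : Submodule F (Fin n → F))
    (h2 : C2 ≤ D) (h1 : D ≤ C1) (J : Finset (Fin n)) :
    Module.finrank F ↥(D.map (proj J))
        + Module.finrank F ↥((C2 ⊔ (D ⊓ LinearMap.ker (proj Jᶜ))).map (proj Jᶜ))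
      ≤ Module.finrank F ↥((C2 ⊔ (D ⊓ LinearMap.ker (proj Jᶜ))).map (proj J))
        + Module.finrank F ↥(D.map (proj Jᶜ)) := by
  set D' := C2 ⊔ (D ⊓ LinearMap.ker (proj Jᶜ)) with hD'
  have hD'le : D' ≤ D := sup_le h2 inf_le_left
  have e1 := finrank_map_aux (proj (F := F) J) D
  have e2 := finrank_map_aux (proj (F := F) Jᶜ) D
  have e3 := finrank_map_aux (proj (F := F) J) D'
  have e4 := finrank_map_aux (proj (F := F) Jᶜ) D'
  have m1 : finrank F ↥(D' ⊓ LinearMap.ker (proj (F := F) J))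
      ≤ finrank F ↥(D ⊓ LinearMap.ker (proj (F := F) J)) :=
    Submodule.finrank_mono (inf_le_inf_right _ hD'le)
  have m2 : finrank F ↥(D ⊓ LinearMap.ker (proj (F := F) Jᶜ))
      ≤ finrank F ↥(D' ⊓ LinearMap.ker (proj (F := F) Jᶜ)) :=
    Submodule.finrank_mono (le_inf le_sup_right inf_le_right)
  have mD : finrank F ↥D' ≤ finrank F ↥D := Submodule.finrank_mono hD'le
  omega
end

section
/- Let q be a prime power, n a positive integer, and C2 ⊆ C1 ⊆ F_q^n nested F_q-linear codes, and let J ⊆ {1,…,n} with complement J̄. Then dim P̃_J(ker P̃_J̄) = dim P_J(C2 + (C1 ∩ ker P_J̄)) − dim P_J(C2); equivalently, dim P̃_J(ker P̃_J̄) + dim P_J(C2) = dim P_J(C2 + (C1 ∩ ker P_J̄)). -/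
set_option autoImplicit false
set_option synthInstance.maxHeartbeats 1000000
set_option maxHeartbeats 1000000

open Submodule Module

variable {F : Type*} [Field F] [Fintype F] {n : ℕ}

lemma ptilde_mk (C1 C2 : Submodule F (Fin n → F)) (J : Finset (Fin n)) (x : C1) :
    ptilde C1 C2 J (Submodule.Quotient.mk x)
      = Submodule.Quotient.mk (⟨proj J (x : Fin n → F), Submodule.mem_map_of_mem x.2⟩ :
        C1.map (proj J)) := rfl

lemma image_ker_ptilde_eq (C1 C2 : Submodule F (Fin n → F)) (h : C2 ≤ C1)
    (J : Finset (Fin n)) :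
    (LinearMap.ker (ptilde C1 C2 Jᶜ)).map (ptilde C1 C2 J)
      = ((((C2 ⊔ (C1 ⊓ LinearMap.ker (proj Jᶜ))).map (proj J)).comap
          (C1.map (proj J)).subtype).map
        ((C2.map (proj J)).comap (C1.map (proj J)).subtype).mkQ) := by
  ext z
  constructor
  · rintro ⟨w, hw, rfl⟩
    obtain ⟨x, rfl⟩ := Submodule.Quotient.mk_surjective _ w
    rw [SetLike.mem_coe, LinearMap.mem_ker, ptilde_mk,
      Submodule.Quotient.mk_eq_zero, Submodule.mem_comap] at hw
    simp only [Submodule.coe_subtype, LinearMap.codRestrict_apply, LinearMap.comp_apply,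
      Submodule.subtype_apply] at hw
    obtain ⟨c, hc, hpc⟩ := hw
    have hxN : (x : Fin n → F) ∈ C2 ⊔ (C1 ⊓ LinearMap.ker (proj Jᶜ)) := by
      rw [Submodule.mem_sup]
      refine ⟨c, hc, (x : Fin n → F) - c, ⟨C1.sub_mem x.2 (h hc), ?_⟩, by ring⟩
      simp only [SetLike.mem_coe, LinearMap.mem_ker, map_sub, hpc, sub_self]
    refine ⟨LinearMap.codRestrict (C1.map (proj J)) ((proj J).comp C1.subtype)
      (fun y => Submodule.mem_map_of_mem y.2) x, ?_, ?_⟩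
    · exact Submodule.mem_comap.mpr ⟨(x : Fin n → F), hxN, rfl⟩
    · rw [ptilde_mk, Submodule.mkQ_apply]
      rfl
  · rintro ⟨s, hs, rfl⟩
    obtain ⟨x, hxN, hx⟩ := Submodule.mem_comap.mp hs
    have hxC1 : x ∈ C1 := by
      rcases Submodule.mem_sup.mp hxN with ⟨c, hc, k, hk, rfl⟩
      exact C1.add_mem (h hc) hk.1
    refine ⟨Submodule.Quotient.mk (⟨x, hxC1⟩ : C1), ?_, ?_⟩
    · rw [SetLike.mem_coe, LinearMap.mem_ker, ptilde_mk,
        Submodule.Quotient.mk_eq_zero, Submodule.mem_comap]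
      simp only [Submodule.coe_subtype, LinearMap.codRestrict_apply, LinearMap.comp_apply,
        Submodule.subtype_apply]
      rcases Submodule.mem_sup.mp hxN with ⟨c, hc, k, hk, rfl⟩
      refine ⟨c, hc, ?_⟩
      rw [map_add, (LinearMap.mem_ker.mp hk.2), add_zero]
    · rw [ptilde_mk, Submodule.mkQ_apply]
      congr 1
      apply Subtype.ext
      simpa using hx

lemma finrank_map_mkQ_add {V : Type*} [AddCommGroup V] [Module F V]
    [FiniteDimensional F V] (V2 S : Submodule F V) (hV2S : V2 ≤ S) :
    Module.finrank F ↥(S.map V2.mkQ) + Module.finrank F ↥V2 = Module.finrank F ↥S := by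
  have hrange : LinearMap.range (V2.mkQ.comp S.subtype) = S.map V2.mkQ := by
    rw [LinearMap.range_comp, Submodule.range_subtype]
  have hker : Module.finrank F ↥(LinearMap.ker (V2.mkQ.comp S.subtype))
      = Module.finrank F ↥V2 := by
    rw [LinearMap.ker_comp, Submodule.ker_mkQ]
    exact (Submodule.comapSubtypeEquivOfLe hV2S).finrank_eq
  have := LinearMap.finrank_range_add_finrank_ker (V2.mkQ.comp S.subtype)
  rw [hrange, hker] at this
  exact this

/-- `dim P̃_J(ker P̃_J̄) + dim P_J(C2) = dim P_J(C2 + (C1 ∩ ker P_J̄))`. -/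
theorem dim_image_ker_ptilde_eq (hn : 0 < n) (C1 C2 : Submodule F (Fin n → F))
    (h : C2 ≤ C1) (J : Finset (Fin n)) :
    Module.finrank F ↥((LinearMap.ker (ptilde C1 C2 Jᶜ)).map (ptilde C1 C2 J))
        + Module.finrank F ↥(C2.map (proj J))
      = Module.finrank F ↥((C2 ⊔ (C1 ⊓ LinearMap.ker (proj Jᶜ))).map (proj J)) := by
  classical
  set N := C2 ⊔ (C1 ⊓ LinearMap.ker (proj Jᶜ)) with hN
  set V1 := C1.map (proj J) with hV1
  set V2 := (C2.map (proj J)).comap V1.subtype with hV2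
  set S := (N.map (proj J)).comap V1.subtype with hS
  have hNC1 : N ≤ C1 := sup_le h inf_le_left
  have hNV1 : N.map (proj J) ≤ V1 := Submodule.map_mono hNC1
  have hC2V1 : C2.map (proj J) ≤ V1 := Submodule.map_mono h
  have hV2S : V2 ≤ S := Submodule.comap_mono (Submodule.map_mono le_sup_left)
  rw [image_ker_ptilde_eq C1 C2 h J]
  have e1 : Module.finrank F ↥V2 = Module.finrank F ↥(C2.map (proj J)) :=
    (Submodule.comapSubtypeEquivOfLe hC2V1).finrank_eq
  have e2 : Module.finrank F ↥S = Module.finrank F ↥(N.map (proj J)) :=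
    (Submodule.comapSubtypeEquivOfLe hNV1).finrank_eq
  have key := finrank_map_mkQ_add V2 S hV2S
  rw [← e1, key, e2]
end

section
/- Let q be a prime power, n a positive integer, and C2 ⊆ C1 ⊆ F_q^n nested F_q-linear codes, and let J ⊆ {1,…,n} with complement J̄. For every F_q-linear code D with C2 ⊆ D ⊆ C1, the integer quantity dim P_J(D) − dim(C2 ∩ ker P_J̄) − (dim P_J̄(D) − dim(C2 ∩ ker P_J)) is at most dim P̃_J(ker P̃_J̄), and equality is attained for D = C2 + (C1 ∩ ker P_J̄). (This is the maximization of the coherent information over intermediate codes D.) -/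
set_option autoImplicit false
set_option linter.unusedSectionVars false
set_option maxHeartbeats 1000000

open Submodule Module

section Aux
variable {F : Type*} [Field F]


variable {F : Type*} [Field F]

/-- Rank-nullity for the image of a submodule under a linear map. -/
lemma finrank_map_add_aux {V M : Type*} [AddCommGroup V] [Module F V] [FiniteDimensional F V]
    [AddCommGroup M] [Module F M] (D : Submodule F V) (f : V →ₗ[F] M) :
    finrank F ↥(D.map f) + finrank F ↥(D ⊓ LinearMap.ker f) = finrank F ↥D := by
  have h1 := LinearMap.finrank_range_add_finrank_ker (f.comp D.subtype)
  have h2 : LinearMap.range (f.comp D.subtype) = D.map f := by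
    rw [LinearMap.range_comp, Submodule.range_subtype]
  have h3 : LinearMap.ker (f.comp D.subtype) = (D ⊓ LinearMap.ker f).comap D.subtype := by
    rw [LinearMap.ker_comp]
    ext x
    simp [x.2]
  have h4 : finrank F ↥((D ⊓ LinearMap.ker f).comap D.subtype)
      = finrank F ↥(D ⊓ LinearMap.ker f) :=
    (Submodule.comapSubtypeEquivOfLe inf_le_left).finrank_eq
  rw [h2, h3, h4] at h1
  exact h1

lemma finrank_comap_subtype_aux {V : Type*} [AddCommGroup V] [Module F V] [FiniteDimensional F V]
    {C1 X : Submodule F V} (hX : X ≤ C1) :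
    finrank F ↥(X.comap C1.subtype) = finrank F ↥X :=
  (Submodule.comapSubtypeEquivOfLe hX).finrank_eq

lemma map_mkQ_inf_aux {V : Type*} [AddCommGroup V] [Module F V]
    {p S T : Submodule F V} (hT : p ≤ T) :
    (S.map p.mkQ) ⊓ (T.map p.mkQ) = (S ⊓ T).map p.mkQ := by
  ext x
  simp only [Submodule.mem_inf, Submodule.mem_map]
  constructor
  · rintro ⟨⟨s, hs, rfl⟩, ⟨t, ht, het⟩⟩
    have hst : s - t ∈ p := by
      rw [Submodule.mkQ_apply, Submodule.mkQ_apply] at het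
      rw [← Submodule.Quotient.eq]
      exact het.symm
    have hsT : s ∈ T := by
      have : s = t + (s - t) := by abel
      rw [this]
      exact T.add_mem ht (hT hst)
    exact ⟨s, ⟨hs, hsT⟩, rfl⟩
  · rintro ⟨s, ⟨hs, hsT⟩, rfl⟩
    exact ⟨⟨s, hs, rfl⟩, ⟨s, hsT, rfl⟩⟩

/-- Purely lattice-theoretic core inequality. -/
lemma key_ineq_aux {V : Type*} [AddCommGroup V] [Module F V] [FiniteDimensional F V]
    (D EA EB : Submodule F V) :
    (finrank F ↥(D ⊓ EB) : ℤ) - finrank F ↥(D ⊓ EA)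
      ≤ (finrank F ↥EB : ℤ) - finrank F ↥(EB ⊓ EA) := by
  have e6 := Submodule.finrank_sup_add_finrank_inf_eq (D ⊓ EB) (EA ⊓ EB)
  have hinf : (D ⊓ EB) ⊓ (EA ⊓ EB) = (D ⊓ EB) ⊓ EA := by
    ext x; simp only [Submodule.mem_inf]; tauto
  have e7 : finrank F ↥((D ⊓ EB) ⊔ (EA ⊓ EB)) ≤ finrank F ↥EB :=
    Submodule.finrank_mono (sup_le inf_le_right inf_le_right)
  have e8 : finrank F ↥((D ⊓ EB) ⊓ EA) ≤ finrank F ↥(D ⊓ EA) :=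
    Submodule.finrank_mono (inf_le_inf_right _ inf_le_left)
  have e9 : finrank F ↥(EB ⊓ EA) = finrank F ↥(EA ⊓ EB) := by rw [inf_comm]
  rw [hinf] at e6
  omega

end Aux


variable {F : Type*} [Field F] [Fintype F] {n : ℕ}

lemma ker_ptilde (C1 C2 : Submodule F (Fin n → F)) (h : C2 ≤ C1) (J : Finset (Fin n)) :
    LinearMap.ker (ptilde C1 C2 J)
      = ((C2 ⊔ C1 ⊓ LinearMap.ker (proj J)).comap C1.subtype).map (C2.comap C1.subtype).mkQ := by
  unfold ptilde Submodule.mapQ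
  rw [Submodule.ker_liftQ]
  congr 1
  rw [LinearMap.ker_comp, Submodule.ker_mkQ]
  ext x
  simp only [Submodule.mem_comap, LinearMap.codRestrict_apply, LinearMap.comp_apply,
    Submodule.coe_subtype]
  constructor
  · intro hx
    rw [Submodule.mem_map] at hx
    obtain ⟨c, hc, hpc⟩ := hx
    rw [Submodule.mem_sup]
    refine ⟨c, hc, (x : Fin n → F) - c, ?_, by abel⟩
    refine Submodule.mem_inf.mpr ⟨sub_mem x.2 (h hc), ?_⟩
    rw [LinearMap.mem_ker, map_sub, hpc]
    exact sub_self _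
  · intro hx
    rw [Submodule.mem_sup] at hx
    obtain ⟨c, hc, k, hk, hck⟩ := hx
    rw [Submodule.mem_map]
    refine ⟨c, hc, ?_⟩
    have hk0 : proj J k = 0 := (Submodule.mem_inf.mp hk).2
    show proj J c = proj J (x : Fin n → F)
    rw [← hck, map_add, hk0, add_zero]

lemma quantity_eq (C1 C2 : Submodule F (Fin n → F)) (h : C2 ≤ C1) (J K : Finset (Fin n))
    (D : Submodule F (Fin n → F)) (hD2 : C2 ≤ D) (hD1 : D ≤ C1) :
    (finrank F ↥(D.map (proj J)) : ℤ) - finrank F ↥(C2 ⊓ LinearMap.ker (proj K))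
      - ((finrank F ↥(D.map (proj K)) : ℤ) - finrank F ↥(C2 ⊓ LinearMap.ker (proj J)))
    = (finrank F ↥(D ⊓ (C2 ⊔ C1 ⊓ LinearMap.ker (proj K))) : ℤ)
      - finrank F ↥(D ⊓ (C2 ⊔ C1 ⊓ LinearMap.ker (proj J))) := by
  have key : ∀ L : Finset (Fin n),
      D ⊓ (C2 ⊔ C1 ⊓ LinearMap.ker (proj L)) = C2 ⊔ (D ⊓ LinearMap.ker (proj L)) := by
    intro L
    calc D ⊓ (C2 ⊔ C1 ⊓ LinearMap.ker (proj L))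
        = (C2 ⊔ C1 ⊓ LinearMap.ker (proj L)) ⊓ D := inf_comm _ _
      _ = C2 ⊔ (C1 ⊓ LinearMap.ker (proj L) ⊓ D) := sup_inf_assoc_of_le _ hD2
      _ = C2 ⊔ (D ⊓ LinearMap.ker (proj L)) := by
          rw [inf_assoc, inf_comm (LinearMap.ker (proj L)) D,
            inf_eq_right.mpr (le_trans inf_le_left hD1)]
  have a1J := finrank_map_add_aux D (proj J)
  have a1K := finrank_map_add_aux D (proj K)
  have a3 : ∀ L : Finset (Fin n),
      finrank F ↥(C2 ⊔ (D ⊓ LinearMap.ker (proj L)))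
        + finrank F ↥(C2 ⊓ LinearMap.ker (proj L))
      = finrank F ↥C2 + finrank F ↥(D ⊓ LinearMap.ker (proj L)) := by
    intro L
    have a4 : C2 ⊓ (D ⊓ LinearMap.ker (proj L)) = C2 ⊓ LinearMap.ker (proj L) := by
      rw [← inf_assoc, inf_eq_left.mpr hD2]
    have := Submodule.finrank_sup_add_finrank_inf_eq C2 (D ⊓ LinearMap.ker (proj L))
    rwa [a4] at this
  have a3J := a3 J
  have a3K := a3 K
  rw [key J, key K]
  omega

lemma rhs_eq (C1 C2 : Submodule F (Fin n → F)) (h : C2 ≤ C1) (J K : Finset (Fin n)) :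
    (finrank F ↥((LinearMap.ker (ptilde C1 C2 K)).map (ptilde C1 C2 J)) : ℤ)
    = (finrank F ↥(C2 ⊔ C1 ⊓ LinearMap.ker (proj K)) : ℤ)
      - finrank F ↥((C2 ⊔ C1 ⊓ LinearMap.ker (proj K)) ⊓ (C2 ⊔ C1 ⊓ LinearMap.ker (proj J))) := by
  set p : Submodule F ↥C1 := C2.comap C1.subtype with hp
  set EK : Submodule F (Fin n → F) := C2 ⊔ C1 ⊓ LinearMap.ker (proj K) with hEK
  set EJ : Submodule F (Fin n → F) := C2 ⊔ C1 ⊓ LinearMap.ker (proj J) with hEJ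
  have hEKle : EK ≤ C1 := sup_le h inf_le_left
  have hEJle : EJ ≤ C1 := sup_le h inf_le_left
  have hr1 := finrank_map_add_aux (LinearMap.ker (ptilde C1 C2 K)) (ptilde C1 C2 J)
  have hkK := ker_ptilde C1 C2 h K
  have hkJ := ker_ptilde C1 C2 h J
  have hinf : LinearMap.ker (ptilde C1 C2 K) ⊓ LinearMap.ker (ptilde C1 C2 J)
      = ((EK ⊓ EJ).comap C1.subtype).map p.mkQ := by
    rw [hkK, hkJ, map_mkQ_inf_aux (Submodule.comap_mono le_sup_left), Submodule.comap_inf]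
  -- generic computation of finrank of (X.comap subtype).map mkQ for C2 ≤ X ≤ C1
  have hgen : ∀ X : Submodule F (Fin n → F), C2 ≤ X → X ≤ C1 →
      finrank F ↥((X.comap C1.subtype).map p.mkQ) + finrank F ↥C2 = finrank F ↥X := by
    intro X hX2 hX1
    have h1 := finrank_map_add_aux (X.comap C1.subtype) p.mkQ
    rw [Submodule.ker_mkQ, inf_eq_right.mpr (Submodule.comap_mono hX2)] at h1
    rw [finrank_comap_subtype_aux h, finrank_comap_subtype_aux hX1] at h1
    exact h1
  have h2 := hgen EK le_sup_left hEKle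
  have h3 := hgen (EK ⊓ EJ) (le_inf le_sup_left le_sup_left) (le_trans inf_le_left hEKle)
  have hf2 : finrank F ↥(LinearMap.ker (ptilde C1 C2 K)) + finrank F ↥C2 = finrank F ↥EK := by
    rw [hkK]; exact h2
  have hf3 : finrank F ↥(LinearMap.ker (ptilde C1 C2 K) ⊓ LinearMap.ker (ptilde C1 C2 J))
      + finrank F ↥C2 = finrank F ↥(EK ⊓ EJ) := by
    rw [hinf]; exact h3
  omega

/-- Maximization of the coherent information over intermediate codes `C2 ⊆ D ⊆ C1`:
the quantity `dim P_J(D) − dim(C2 ∩ ker P_J̄) − (dim P_J̄(D) − dim(C2 ∩ ker P_J))` is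
at most `dim P̃_J(ker P̃_J̄)`, with equality for `D = C2 + (C1 ∩ ker P_J̄)`. -/
theorem coherent_information_max (hn : 0 < n) (C1 C2 : Submodule F (Fin n → F))
    (h : C2 ≤ C1) (J : Finset (Fin n)) :
    (∀ D : Submodule F (Fin n → F), C2 ≤ D → D ≤ C1 →
        (Module.finrank F ↥(D.map (proj J)) : ℤ)
            - Module.finrank F ↥(C2 ⊓ LinearMap.ker (proj Jᶜ))
            - ((Module.finrank F ↥(D.map (proj Jᶜ)) : ℤ)
                - Module.finrank F ↥(C2 ⊓ LinearMap.ker (proj J)))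
          ≤ Module.finrank F ↥((LinearMap.ker (ptilde C1 C2 Jᶜ)).map (ptilde C1 C2 J)))
      ∧ (Module.finrank F ↥((C2 ⊔ (C1 ⊓ LinearMap.ker (proj Jᶜ))).map (proj J)) : ℤ)
            - Module.finrank F ↥(C2 ⊓ LinearMap.ker (proj Jᶜ))
            - ((Module.finrank F ↥((C2 ⊔ (C1 ⊓ LinearMap.ker (proj Jᶜ))).map (proj Jᶜ)) : ℤ)
                - Module.finrank F ↥(C2 ⊓ LinearMap.ker (proj J)))
          = Module.finrank F ↥((LinearMap.ker (ptilde C1 C2 Jᶜ)).map (ptilde C1 C2 J)) := by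
  constructor
  · intro D hD2 hD1
    rw [quantity_eq C1 C2 h J Jᶜ D hD2 hD1, rhs_eq C1 C2 h J Jᶜ]
    exact key_ineq_aux D _ _
  · rw [quantity_eq C1 C2 h J Jᶜ _ le_sup_left (sup_le h inf_le_left), rhs_eq C1 C2 h J Jᶜ,
      inf_idem]
end

section
/- Let q be a prime power, n ≥ 1, and 1 ≤ L ≤ k ≤ n. Let α_1,…,α_n ∈ F_q be pairwise distinct and all nonzero, and set C1 = GRS_{n,k}(α,1) and C2 = GRS_{n,k−L}(α,α^L). Then every subset J ⊆ {1,…,n} with |J| ≥ k and n − |J| ≤ k − L satisfies dim P_J(C1) − dim P_J(C2) = L = dim C1 − dim C2 and dim P_J̄(C1) = dim P_J̄(C2); consequently dim P̃_J(ker P̃_J̄) = dim C1 − dim C2 = L. -/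
set_option autoImplicit false

open Submodule Module

variable {F : Type*} [Field F] [Fintype F] {n : ℕ}

/-- The generalized Reed–Solomon code
`GRS_{n,k}(α,v) = {(v₁ h(α₁),…,vₙ h(αₙ)) : h ∈ F[X], deg h ≤ k−1}`. -/
noncomputable def GRS (k : ℕ) (α v : Fin n → F) : Submodule F (Fin n → F) :=
  (Polynomial.degreeLT F k).map
    (LinearMap.pi fun i => v i • Polynomial.leval (α i))

open Polynomial in
private lemma finrank_GRS_map {ι : Type*} [Fintype ι] (k : ℕ) (β w : ι → F)
    (hβ : Function.Injective β) (hw : ∀ i, w i ≠ 0) :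
    finrank F ↥((degreeLT F k).map (LinearMap.pi fun i => w i • Polynomial.leval (β i)))
      = min k (Fintype.card ι) := by
  classical
  set E : F[X] →ₗ[F] (ι → F) := LinearMap.pi fun i => w i • Polynomial.leval (β i) with hE
  rcases le_or_gt k (Fintype.card ι) with h | h
  · rw [min_eq_left h]
    have hr : (degreeLT F k).map E = LinearMap.range (E ∘ₗ (degreeLT F k).subtype) := by
      rw [LinearMap.range_comp, Submodule.range_subtype]
    have hinj : Function.Injective (E ∘ₗ (degreeLT F k).subtype) := by
      rw [← LinearMap.ker_eq_bot, LinearMap.ker_eq_bot']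
      rintro ⟨p, hp⟩ hz
      have heval : ∀ i, p.eval (β i) = 0 := by
        intro i
        have this : w i * p.eval (β i) = 0 := congrFun hz i
        exact (mul_eq_zero.mp this).resolve_left (hw i)
      rcases eq_or_ne p 0 with rfl | hp0
      · rfl
      · have hd : p.natDegree < k := by
          rw [Polynomial.natDegree_lt_iff_degree_lt hp0]
          exact_mod_cast Polynomial.mem_degreeLT.mp hp
        exact absurd (Polynomial.eq_zero_of_natDegree_lt_card_of_eval_eq_zero p hβ heval
          (lt_of_lt_of_le hd h)) hp0
    rw [hr, LinearMap.finrank_range_of_inj hinj,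
      (Polynomial.degreeLTEquiv F k).finrank_eq, Module.finrank_pi, Fintype.card_fin]
  · rw [min_eq_right h.le]
    have htop : (degreeLT F k).map E = ⊤ := by
      rw [eq_top_iff]
      intro f _
      refine ⟨Lagrange.interpolate Finset.univ β (fun i => f i / w i), ?_, ?_⟩
      · refine Polynomial.mem_degreeLT.mpr ?_
        refine lt_of_lt_of_le (Lagrange.degree_interpolate_lt _ hβ.injOn) ?_
        rw [Finset.card_univ]
        exact_mod_cast h.le
      · funext i
        simp only [hE, LinearMap.pi_apply, LinearMap.smul_apply, leval_apply, smul_eq_mul]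
        rw [Lagrange.eval_interpolate_at_node _ hβ.injOn (Finset.mem_univ i),
          mul_div_cancel₀ _ (hw i)]
    rw [htop, finrank_top, Module.finrank_pi]

open Polynomial in
private lemma map_proj_GRS (k : ℕ) (α v : Fin n → F) (J : Finset (Fin n)) :
    (GRS k α v).map (proj J) =
      (degreeLT F k).map (LinearMap.pi fun j : J => v j • Polynomial.leval (α j)) := by
  rw [GRS, ← Submodule.map_comp]
  congr 1

open Polynomial in
private lemma GRS_le (k L : ℕ) (hLk : L ≤ k) (α : Fin n → F) :
    GRS (k - L) α (fun i => α i ^ L) ≤ GRS k α (fun _ => (1:F)) := by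
  rintro x ⟨p, hp, rfl⟩
  have hp' : p.degree < (↑(k - L) : WithBot ℕ) := Polynomial.mem_degreeLT.mp hp
  refine ⟨X ^ L * p, Polynomial.mem_degreeLT.mpr ?_, ?_⟩
  · rcases eq_or_ne p 0 with rfl | hp0
    · rw [mul_zero, Polynomial.degree_zero]
      exact WithBot.bot_lt_coe k
    · have hd : p.natDegree < k - L :=
        (Polynomial.natDegree_lt_iff_degree_lt hp0).mpr hp'
      rw [Polynomial.degree_mul, Polynomial.degree_X_pow,
        Polynomial.degree_eq_natDegree hp0]
      exact_mod_cast by omega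
  · funext i
    simp [mul_comm]

set_option maxHeartbeats 1000000 in
/-- For `C1 = GRS_{n,k}(α,1)` and `C2 = GRS_{n,k−L}(α,α^L)` with `1 ≤ L ≤ k ≤ n` and
pairwise distinct nonzero `α_i`, every `J` with `|J| ≥ k` and `n − |J| ≤ k − L` satisfies
`dim P_J(C1) = dim P_J(C2) + L`, `dim C1 = dim C2 + L`, `dim P_J̄(C1) = dim P_J̄(C2)`,
and consequently `dim P̃_J(ker P̃_J̄) = L`. -/
theorem conventional_scheme_qualified (hn : 0 < n) (k L : ℕ)
    (hL : 1 ≤ L) (hLk : L ≤ k) (hk : k ≤ n) (α : Fin n → F)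
    (hα : Function.Injective α) (hα0 : ∀ i, α i ≠ 0)
    (J : Finset (Fin n)) (hJ : k ≤ J.card) (hJbar : n - J.card ≤ k - L) :
    Module.finrank F ↥((GRS k α (fun _ => (1:F))).map (proj J))
        = Module.finrank F ↥((GRS (k - L) α (fun i => α i ^ L)).map (proj J)) + L
      ∧ Module.finrank F ↥(GRS k α (fun _ => (1:F)))
        = Module.finrank F ↥(GRS (k - L) α (fun i => α i ^ L)) + L
      ∧ Module.finrank F ↥((GRS k α (fun _ => (1:F))).map (proj Jᶜ))
        = Module.finrank F ↥((GRS (k - L) α (fun i => α i ^ L)).map (proj Jᶜ))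
      ∧ Module.finrank F
          ↥((LinearMap.ker (ptilde (GRS k α (fun _ => (1:F))) (GRS (k - L) α (fun i => α i ^ L)) Jᶜ)).map
              (ptilde (GRS k α (fun _ => (1:F))) (GRS (k - L) α (fun i => α i ^ L)) J))
        = L := by
  have hαJ : Function.Injective fun j : J => α j := hα.comp Subtype.val_injective
  have hαJc : Function.Injective fun j : (Jᶜ : Finset (Fin n)) => α j :=
    hα.comp Subtype.val_injective
  have hcardJc : (Jᶜ : Finset (Fin n)).card = n - J.card := by
    rw [Finset.card_compl, Fintype.card_fin]
  -- projected dimensions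
  have hC1J : finrank F ↥((GRS k α (fun _ => (1:F))).map (proj J)) = k := by
    rw [map_proj_GRS, finrank_GRS_map k _ _ hαJ (fun _ => one_ne_zero), Fintype.card_coe,
      min_eq_left hJ]
  have hC2J : finrank F ↥((GRS (k - L) α (fun i => α i ^ L)).map (proj J)) = k - L := by
    rw [map_proj_GRS, finrank_GRS_map (k - L) _ _ hαJ
      (fun i => pow_ne_zero _ (hα0 _)), Fintype.card_coe, min_eq_left (by omega)]
  have hC1Jc : finrank F ↥((GRS k α (fun _ => (1:F))).map (proj Jᶜ)) = n - J.card := by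
    rw [map_proj_GRS, finrank_GRS_map k _ _ hαJc (fun _ => one_ne_zero), Fintype.card_coe,
      hcardJc, min_eq_right (by omega)]
  have hC2Jc : finrank F ↥((GRS (k - L) α (fun i => α i ^ L)).map (proj Jᶜ)) = n - J.card := by
    rw [map_proj_GRS, finrank_GRS_map (k - L) _ _ hαJc
      (fun i => pow_ne_zero _ (hα0 _)), Fintype.card_coe, hcardJc, min_eq_right hJbar]
  have hC1 : finrank F ↥(GRS k α (fun _ => (1:F))) = k := by
    rw [GRS, finrank_GRS_map k _ _ hα (fun _ => one_ne_zero), Fintype.card_fin,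
      min_eq_left hk]
  have hC2 : finrank F ↥(GRS (k - L) α (fun i => α i ^ L)) = k - L := by
    rw [GRS, finrank_GRS_map (k - L) _ _ hα (fun i => pow_ne_zero _ (hα0 _)),
      Fintype.card_fin, min_eq_left (by omega)]
  have hle : GRS (k - L) α (fun i => α i ^ L) ≤ GRS k α (fun _ => (1:F)) := GRS_le k L hLk α
  refine ⟨by omega, by omega, by omega, ?_⟩
  set C1 := GRS k α (fun _ => (1:F)) with hC1def
  set C2 := GRS (k - L) α (fun i => α i ^ L) with hC2def
  -- the Jᶜ projections coincide
  have heq : C2.map (proj Jᶜ) = C1.map (proj Jᶜ) :=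
    Submodule.eq_of_le_of_finrank_le (Submodule.map_mono hle) (by omega)
  -- hence ker of ptilde Jᶜ is everything
  have hker : LinearMap.ker (ptilde C1 C2 Jᶜ) = ⊤ := by
    have htop : (C2.map (proj Jᶜ)).comap (C1.map (proj Jᶜ)).subtype = ⊤ := by
      rw [heq]; exact Submodule.comap_subtype_self _
    have : Subsingleton (↥(C1.map (proj Jᶜ)) ⧸
        (C2.map (proj Jᶜ)).comap (C1.map (proj Jᶜ)).subtype) :=
      Submodule.Quotient.subsingleton_iff.mpr htop
    rw [LinearMap.ker_eq_top]
    exact LinearMap.ext fun x => Subsingleton.elim _ _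
  have hsurj : Function.Surjective (ptilde C1 C2 J) := by
    intro y
    obtain ⟨z, rfl⟩ := Submodule.Quotient.mk_surjective _ y
    obtain ⟨x, hx, hxz⟩ := z.2
    refine ⟨Submodule.Quotient.mk ⟨x, hx⟩, ?_⟩
    show Submodule.Quotient.mk _ = Submodule.Quotient.mk z
    congr 1
    exact Subtype.ext hxz
  have hmap : (LinearMap.ker (ptilde C1 C2 Jᶜ)).map (ptilde C1 C2 J) = ⊤ := by
    rw [hker, Submodule.map_top, LinearMap.range_eq_top.mpr hsurj]
  rw [hmap, finrank_top]
  have hfq := Submodule.finrank_quotient_add_finrank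
    ((C2.map (proj J)).comap (C1.map (proj J)).subtype)
  have hfs : finrank F ↥((C2.map (proj J)).comap (C1.map (proj J)).subtype)
      = finrank F ↥(C2.map (proj J)) :=
    (Submodule.comapSubtypeEquivOfLe (Submodule.map_mono hle)).finrank_eq
  rw [hfs, hC2J, hC1J] at hfq
  omega
end
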